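/- Let q be a unital quantum channel on M_n and let U ∈ Matrix (Fin n × Fin m) (Fin n × Fin m) ℂ be unitary with ptr_m(U * (A ⊗ I_m) * Uᴴ) = q(A) for all A ∈ M_n (a matrix 1-dilation of q). Fix N ≥ 1 and work in Matrix (Fin n × (Fin N → Fin m)) (Fin n × (Fin N → Fin m)) ℂ, the realization of M_n ⊗ M_m^{⊗N}. Let σ_N be the linear map given by σ_N(X) ((a,f),(b,g)) = X ((a, f ∘ c), (b, g ∘ c)) where c : Fin N → Fin N is the cyclic shift c(i) = i+1 (mod N); let U_N be U acting on M_n and the 0-th tensor factor of M_m^{⊗N}, i.e. (U_N) ((a,f),(b,g)) = U ((a, f 0), (b, g 0)) · Π_{i≠0} δ_{f(i), g(i)}; and let α_N(X) := U_N * σ_N(X) * U_Nᴴ. Then for every M with 1 ≤ M ≤ N and every A ∈ M_n, the partial trace over the second index of the M-fold iterate satisfies m^{-N} · Σ_f (α_N^{(M)}(A ⊗ I)) ((a,f),(b,f)) = (q^{(M)}(A)) a b, where q^{(M)} is the M-fold composition q ∘ ⋯ ∘ q and A ⊗ I is the Kronecker product of A with the identity on Fin N → Fin m. That is, α_N is a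 matrix N-dilation of q. -/

import Mathlib

open Matrix
open scoped Kronecker

section DilationAux
open Finset
open Fin.CommRing

lemma sum_update_aux {N m : ℕ} [NeZero N] [NeZero m]
    (f : Fin N → Fin m) (F : (Fin N → Fin m) → ℂ) :
    ∑ f' : Fin N → Fin m,
      (∏ i ∈ Finset.univ.filter (fun i : Fin N => i ≠ 0),
        (if f i = f' i then (1:ℂ) else 0)) * F f'
      = ∑ x : Fin m, F (Function.update f 0 x) := by
  classical
  rw [← Equiv.sum_comp (Equiv.funSplitAt (0 : Fin N) (Fin m)).symm
    (fun f' => (∏ i ∈ Finset.univ.filter (fun i : Fin N => i ≠ 0),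
        (if f i = f' i then (1:ℂ) else 0)) * F f'), Fintype.sum_prod_type]
  refine Finset.sum_congr rfl fun x _ => ?_
  have hsub : ∀ r : { j : Fin N // j ≠ 0 } → Fin m,
      (∏ i ∈ Finset.univ.filter (fun i : Fin N => i ≠ 0),
        (if f i = (Equiv.funSplitAt (0 : Fin N) (Fin m)).symm (x, r) i then (1:ℂ) else 0))
      = if (fun j : { j : Fin N // j ≠ 0 } => f j) = r then (1:ℂ) else 0 := by
    intro r
    rw [show (Finset.univ.filter (fun i : Fin N => i ≠ 0))
        = Finset.univ.map (Function.Embedding.subtype (fun j : Fin N => j ≠ 0)) by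
      ext i; simp]
    rw [Finset.prod_map, Finset.prod_boole]
    congr 1
    rw [eq_iff_iff]
    simp only [Function.Embedding.coe_subtype, Equiv.funSplitAt_symm_apply, funext_iff,
      Finset.mem_univ, forall_true_left]
    constructor
    · intro h j; have := h j; rw [this, dif_neg j.2]
    · intro h j; rw [h j, dif_neg j.2]
  simp only [hsub]
  rw [Finset.sum_congr rfl (fun r _ => (boole_mul _ _)), Finset.sum_ite_eq Finset.univ _
    (fun r => F ((Equiv.funSplitAt (0 : Fin N) (Fin m)).symm (x, r))), if_pos (Finset.mem_univ _)]
  congr 1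

noncomputable def Tm {n m : ℕ} (U : Matrix (Fin n × Fin m) (Fin n × Fin m) ℂ) :
    ℕ → Matrix (Fin n) (Fin n) ℂ → Fin n → Fin n → (ℕ → Fin m) → (ℕ → Fin m) → ℂ
  | 0, A, a, b, _, _ => A a b
  | (M+1), A, a, b, t, s =>
      ∑ x : Fin m, ∑ a' : Fin n, ∑ b' : Fin n,
        U (a, t 0) (a', x) * Tm U M A a' b' (fun j => t (j+1)) (fun j => s (j+1)) *
          (starRingEnd ℂ) (U (b, s 0) (b', x))

lemma Tm_congr {n m : ℕ} (U : Matrix (Fin n × Fin m) (Fin n × Fin m) ℂ) :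
    ∀ (M : ℕ) (A : Matrix (Fin n) (Fin n) ℂ) (a b : Fin n) (t s t' s' : ℕ → Fin m),
    (∀ j < M, t j = t' j) → (∀ j < M, s j = s' j) →
    Tm U M A a b t s = Tm U M A a b t' s'
  | 0, A, a, b, t, s, t', s', _, _ => rfl
  | (M+1), A, a, b, t, s, t', s', ht, hs => by
      simp only [Tm]
      refine Finset.sum_congr rfl fun x _ => Finset.sum_congr rfl fun a' _ =>
        Finset.sum_congr rfl fun b' _ => ?_
      rw [ht 0 (Nat.succ_pos M), hs 0 (Nat.succ_pos M),
        Tm_congr U M A a' b' (fun j => t (j+1)) (fun j => s (j+1))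
          (fun j => t' (j+1)) (fun j => s' (j+1))
          (fun j hj => ht (j+1) (Nat.succ_lt_succ hj))
          (fun j hj => hs (j+1) (Nat.succ_lt_succ hj))]

lemma sum4_comm {A B C D M : Type*} [Fintype A] [Fintype B] [Fintype C] [Fintype D]
    [AddCommMonoid M] (F : A → B → C → D → M) :
    (∑ a : A, ∑ b : B, ∑ c : C, ∑ d : D, F a b c d)
      = ∑ d : D, ∑ b : B, ∑ c : C, ∑ a : A, F a b c d := by
  calc (∑ a : A, ∑ b : B, ∑ c : C, ∑ d : D, F a b c d)
      = ∑ a : A, ∑ b : B, ∑ d : D, ∑ c : C, F a b c d :=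
        Finset.sum_congr rfl fun a _ => Finset.sum_congr rfl fun b _ => Finset.sum_comm
    _ = ∑ a : A, ∑ d : D, ∑ b : B, ∑ c : C, F a b c d :=
        Finset.sum_congr rfl fun a _ => Finset.sum_comm
    _ = ∑ d : D, ∑ a : A, ∑ b : B, ∑ c : C, F a b c d := Finset.sum_comm
    _ = ∑ d : D, ∑ b : B, ∑ a : A, ∑ c : C, F a b c d :=
        Finset.sum_congr rfl fun d _ => Finset.sum_comm
    _ = ∑ d : D, ∑ b : B, ∑ c : C, ∑ a : A, F a b c d :=
        Finset.sum_congr rfl fun d _ => Finset.sum_congr rfl fun b _ => Finset.sum_comm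


lemma prod_delta_shift {m N : ℕ} [NeZero m] [NeZero N] (M : ℕ) (hMN : M + 1 ≤ N)
    (f g : Fin N → Fin m) (x y : Fin m) :
    (∏ j ∈ Finset.univ.filter (fun j : Fin N => M ≤ (j : ℕ)),
      (if (Function.update f 0 x ∘ fun i : Fin N => i + 1) j
          = (Function.update g 0 y ∘ fun i : Fin N => i + 1) j then (1:ℂ) else 0))
    = (if x = y then (1:ℂ) else 0) *
        ∏ j ∈ Finset.univ.filter (fun j : Fin N => M + 1 ≤ (j : ℕ)),
          (if f j = g j then (1:ℂ) else 0) := by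
  classical
  set D : Fin N → ℂ := fun k =>
    if k = 0 then (if x = y then (1:ℂ) else 0) else (if f k = g k then (1:ℂ) else 0) with hD
  have hval1 : ∀ j : Fin N, ((j + 1 : Fin N) : ℕ) = ((j : ℕ) + 1 % N) % N := by
    intro j; rw [Fin.val_add, Fin.val_one']
  have step1 : (∏ j ∈ Finset.univ.filter (fun j : Fin N => M ≤ (j : ℕ)),
      (if (Function.update f 0 x ∘ fun i : Fin N => i + 1) j
          = (Function.update g 0 y ∘ fun i : Fin N => i + 1) j then (1:ℂ) else 0))
      = ∏ j ∈ Finset.univ.filter (fun j : Fin N => M ≤ (j : ℕ)), D (j + 1) := by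
    refine Finset.prod_congr rfl fun j _ => ?_
    by_cases h : (j + 1 : Fin N) = 0
    · simp [D, h, Function.update_apply]
    · simp [D, h, Function.update_apply]
  rw [step1, ← Finset.prod_image (f := D) (g := fun j : Fin N => j + 1)
    (s := Finset.univ.filter (fun j : Fin N => M ≤ (j : ℕ)))
    (by intro p _ q _ h; exact add_right_cancel h)]
  have himg : (Finset.univ.filter (fun j : Fin N => M ≤ (j : ℕ))).image (fun j => j + 1)
      = insert (0 : Fin N) (Finset.univ.filter (fun j : Fin N => M + 1 ≤ (j : ℕ))) := by
    ext k
    simp only [Finset.mem_image, Finset.mem_filter, Finset.mem_insert, Finset.mem_univ,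
      true_and]
    constructor
    · rintro ⟨j, hj, rfl⟩
      by_cases hN1 : N = 1
      · left
        apply Fin.ext
        have h0 : ∀ z : Fin N, (z : ℕ) = 0 := by intro z; have := z.isLt; omega
        rw [h0, h0]
      · have h1N : 1 % N = 1 := Nat.mod_eq_of_lt (by omega)
        by_cases hlast : (j : ℕ) = N - 1
        · left
          apply Fin.ext
          rw [hval1, h1N, hlast]
          have : N - 1 + 1 = N := by omega
          rw [this, Nat.mod_self]
          rfl
        · right
          rw [hval1, h1N]
          have hjlt := j.isLt
          rw [Nat.mod_eq_of_lt (by omega)]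
          omega
    · rintro (rfl | hk)
      · refine ⟨⟨N - 1, by omega⟩, by simpa using (by omega : M ≤ N - 1), ?_⟩
        apply Fin.ext
        rw [hval1]
        simp only []
        by_cases hN1 : N = 1
        · subst hN1; rfl
        · have h1N : 1 % N = 1 := Nat.mod_eq_of_lt (by omega)
          rw [h1N]
          show (N - 1 + 1) % N = (0 : Fin N).val
          have : N - 1 + 1 = N := by omega
          rw [this, Nat.mod_self]
          rfl
      · have hklt := k.isLt
        have hN2 : 2 ≤ N := by omega
        refine ⟨⟨(k : ℕ) - 1, by omega⟩, by simpa using (by omega : M ≤ (k:ℕ) - 1), ?_⟩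
        apply Fin.ext
        rw [hval1]
        have h1N : 1 % N = 1 := Nat.mod_eq_of_lt (by omega)
        rw [h1N]
        show ((k:ℕ) - 1 + 1) % N = (k : ℕ)
        rw [show (k:ℕ) - 1 + 1 = (k:ℕ) by omega, Nat.mod_eq_of_lt hklt]
  rw [himg, Finset.prod_insert (by simp), hD]
  simp only [if_pos rfl]
  congr 1
  refine Finset.prod_congr rfl fun k hk => ?_
  rw [Finset.mem_filter] at hk
  have : k ≠ 0 := by
    intro h; rw [h] at hk; simp at hk
  rw [if_neg this]

lemma sum3_comm {A B C M : Type*} [Fintype A] [Fintype B] [Fintype C]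
    [AddCommMonoid M] (F : A → B → C → M) :
    (∑ a : A, ∑ b : B, ∑ c : C, F a b c) = ∑ b : B, ∑ c : C, ∑ a : A, F a b c := by
  rw [Finset.sum_comm]
  exact Finset.sum_congr rfl fun b _ => Finset.sum_comm

section
variable {n m N : ℕ} [NeZero n] [NeZero m] [NeZero N]
  (U : Matrix (Fin n × Fin m) (Fin n × Fin m) ℂ)
  (σ : Matrix (Fin n × (Fin N → Fin m)) (Fin n × (Fin N → Fin m)) ℂ →
       Matrix (Fin n × (Fin N → Fin m)) (Fin n × (Fin N → Fin m)) ℂ)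
  (UN : Matrix (Fin n × (Fin N → Fin m)) (Fin n × (Fin N → Fin m)) ℂ)
  (α : Matrix (Fin n × (Fin N → Fin m)) (Fin n × (Fin N → Fin m)) ℂ →
       Matrix (Fin n × (Fin N → Fin m)) (Fin n × (Fin N → Fin m)) ℂ)

lemma alpha_apply
    (hσ : ∀ X (a b : Fin n) (f g : Fin N → Fin m),
      σ X (a, f) (b, g) = X (a, f ∘ (fun i : Fin N => i + 1)) (b, g ∘ (fun i : Fin N => i + 1)))
    (hUN : ∀ (a b : Fin n) (f g : Fin N → Fin m),
      UN (a, f) (b, g)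
        = U (a, f 0) (b, g 0) *
            ∏ i ∈ Finset.univ.filter (fun i : Fin N => i ≠ 0),
              (if f i = g i then (1 : ℂ) else 0))
    (hα : ∀ X, α X = UN * σ X * UNᴴ)
    (Y : Matrix (Fin n × (Fin N → Fin m)) (Fin n × (Fin N → Fin m)) ℂ)
    (a b : Fin n) (f g : Fin N → Fin m) :
    α Y (a, f) (b, g)
      = ∑ x : Fin m, ∑ y : Fin m, ∑ a' : Fin n, ∑ b' : Fin n,
          U (a, f 0) (a', x) *
            Y (a', (Function.update f 0 x) ∘ (fun i : Fin N => i + 1))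
              (b', (Function.update g 0 y) ∘ (fun i : Fin N => i + 1)) *
          star (U (b, g 0) (b', y)) := by
  rw [hα]
  simp only [Matrix.mul_apply, Matrix.conjTranspose_apply, Fintype.sum_prod_type,
    hUN, hσ, star_mul', star_prod, apply_ite (star : ℂ → ℂ), star_one, star_zero,
    Finset.sum_mul, Finset.mul_sum]
  have step1 : ∀ (b' : Fin n) (g' : Fin N → Fin m) (a' : Fin n),
      (∑ f' : Fin N → Fin m,
        (U (a, f 0) (a', f' 0) *
            ∏ i ∈ Finset.univ.filter (fun i : Fin N => i ≠ 0),
              (if f i = f' i then (1:ℂ) else 0)) *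
          Y (a', f' ∘ fun i => i + 1) (b', g' ∘ fun i => i + 1) *
          (star (U (b, g 0) (b', g' 0)) *
            ∏ i ∈ Finset.univ.filter (fun i : Fin N => i ≠ 0),
              (if g i = g' i then (1:ℂ) else 0)))
      = ∑ x : Fin m,
          U (a, f 0) (a', x) *
            Y (a', Function.update f 0 x ∘ fun i => i + 1) (b', g' ∘ fun i => i + 1) *
            (star (U (b, g 0) (b', g' 0)) *
              ∏ i ∈ Finset.univ.filter (fun i : Fin N => i ≠ 0),
                (if g i = g' i then (1:ℂ) else 0)) := by
    intro b' g' a'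
    rw [show (∑ f' : Fin N → Fin m,
        (U (a, f 0) (a', f' 0) *
            ∏ i ∈ Finset.univ.filter (fun i : Fin N => i ≠ 0),
              (if f i = f' i then (1:ℂ) else 0)) *
          Y (a', f' ∘ fun i => i + 1) (b', g' ∘ fun i => i + 1) *
          (star (U (b, g 0) (b', g' 0)) *
            ∏ i ∈ Finset.univ.filter (fun i : Fin N => i ≠ 0),
              (if g i = g' i then (1:ℂ) else 0)))
      = ∑ f' : Fin N → Fin m,
        (∏ i ∈ Finset.univ.filter (fun i : Fin N => i ≠ 0),
              (if f i = f' i then (1:ℂ) else 0)) *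
        (U (a, f 0) (a', f' 0) *
          Y (a', f' ∘ fun i => i + 1) (b', g' ∘ fun i => i + 1) *
          (star (U (b, g 0) (b', g' 0)) *
            ∏ i ∈ Finset.univ.filter (fun i : Fin N => i ≠ 0),
              (if g i = g' i then (1:ℂ) else 0)))
      from Finset.sum_congr rfl fun f' _ => by ring]
    rw [sum_update_aux f (fun h => U (a, f 0) (a', h 0) *
          Y (a', h ∘ fun i => i + 1) (b', g' ∘ fun i => i + 1) *
          (star (U (b, g 0) (b', g' 0)) *
            ∏ i ∈ Finset.univ.filter (fun i : Fin N => i ≠ 0),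
              (if g i = g' i then (1:ℂ) else 0)))]
    simp only [Function.update_self]
  rw [Finset.sum_congr rfl fun b' _ => Finset.sum_congr rfl fun g' _ =>
    Finset.sum_congr rfl fun a' _ => step1 b' g' a']
  have step2 : ∀ b' : Fin n,
      (∑ g' : Fin N → Fin m, ∑ a' : Fin n, ∑ x : Fin m,
        U (a, f 0) (a', x) *
          Y (a', Function.update f 0 x ∘ fun i => i + 1) (b', g' ∘ fun i => i + 1) *
          (star (U (b, g 0) (b', g' 0)) *
            ∏ i ∈ Finset.univ.filter (fun i : Fin N => i ≠ 0),
              (if g i = g' i then (1:ℂ) else 0)))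
      = ∑ y : Fin m, ∑ a' : Fin n, ∑ x : Fin m,
          U (a, f 0) (a', x) *
            Y (a', Function.update f 0 x ∘ fun i => i + 1)
              (b', Function.update g 0 y ∘ fun i => i + 1) *
            star (U (b, g 0) (b', y)) := by
    intro b'
    rw [show (∑ g' : Fin N → Fin m, ∑ a' : Fin n, ∑ x : Fin m,
        U (a, f 0) (a', x) *
          Y (a', Function.update f 0 x ∘ fun i => i + 1) (b', g' ∘ fun i => i + 1) *
          (star (U (b, g 0) (b', g' 0)) *
            ∏ i ∈ Finset.univ.filter (fun i : Fin N => i ≠ 0),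
              (if g i = g' i then (1:ℂ) else 0)))
      = ∑ g' : Fin N → Fin m,
        (∏ i ∈ Finset.univ.filter (fun i : Fin N => i ≠ 0),
              (if g i = g' i then (1:ℂ) else 0)) *
        (∑ a' : Fin n, ∑ x : Fin m,
          U (a, f 0) (a', x) *
            Y (a', Function.update f 0 x ∘ fun i => i + 1) (b', g' ∘ fun i => i + 1) *
            star (U (b, g 0) (b', g' 0)))
      from Finset.sum_congr rfl fun g' _ => by
        rw [Finset.mul_sum]
        refine Finset.sum_congr rfl fun a' _ => ?_
        rw [Finset.mul_sum]
        refine Finset.sum_congr rfl fun x _ => by ring]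
    rw [sum_update_aux g (fun h => ∑ a' : Fin n, ∑ x : Fin m,
          U (a, f 0) (a', x) *
            Y (a', Function.update f 0 x ∘ fun i => i + 1) (b', h ∘ fun i => i + 1) *
            star (U (b, g 0) (b', h 0)))]
    simp only [Function.update_self]
  rw [Finset.sum_congr rfl fun b' _ => step2 b']
  exact sum4_comm (fun (b' : Fin n) (y : Fin m) (a' : Fin n) (x : Fin m) =>
    U (a, f 0) (a', x) *
      Y (a', Function.update f 0 x ∘ fun i => i + 1)
        (b', Function.update g 0 y ∘ fun i => i + 1) *
      star (U (b, g 0) (b', y)))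

lemma iterate_entry
    (hσ : ∀ X (a b : Fin n) (f g : Fin N → Fin m),
      σ X (a, f) (b, g) = X (a, f ∘ (fun i : Fin N => i + 1)) (b, g ∘ (fun i : Fin N => i + 1)))
    (hUN : ∀ (a b : Fin n) (f g : Fin N → Fin m),
      UN (a, f) (b, g)
        = U (a, f 0) (b, g 0) *
            ∏ i ∈ Finset.univ.filter (fun i : Fin N => i ≠ 0),
              (if f i = g i then (1 : ℂ) else 0))
    (hα : ∀ X, α X = UN * σ X * UNᴴ)
    (A : Matrix (Fin n) (Fin n) ℂ) :
    ∀ M : ℕ, M ≤ N → ∀ (a b : Fin n) (f g : Fin N → Fin m),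
      (α^[M] (A ⊗ₖ (1 : Matrix (Fin N → Fin m) (Fin N → Fin m) ℂ))) (a, f) (b, g)
        = Tm U M A a b (fun j : ℕ => f (j : Fin N)) (fun j : ℕ => g (j : Fin N)) *
            ∏ j ∈ Finset.univ.filter (fun j : Fin N => M ≤ (j : ℕ)),
              (if f j = g j then (1:ℂ) else 0) := by
  intro M
  induction M with
  | zero =>
    intro _ a b f g
    simp only [Function.iterate_zero, id_eq, Tm]
    rw [show (Finset.univ.filter (fun j : Fin N => 0 ≤ (j : ℕ))) = Finset.univ by
      simp, Finset.prod_boole]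
    rw [Matrix.kroneckerMap_apply, Matrix.one_apply]
    congr 1
    simp [funext_iff, eq_comm]
  | succ M ih =>
    intro hMN a b f g
    have hMN' : M ≤ N := Nat.le_of_succ_le hMN
    rw [Function.iterate_succ_apply', alpha_apply U σ UN α hσ hUN hα _ a b f g]
    have key : ∀ (x y : Fin m) (a' b' : Fin n),
        (α^[M] (A ⊗ₖ (1 : Matrix (Fin N → Fin m) (Fin N → Fin m) ℂ)))
            (a', Function.update f 0 x ∘ fun i : Fin N => i + 1)
            (b', Function.update g 0 y ∘ fun i : Fin N => i + 1)
        = Tm U M A a' b' (fun j : ℕ => f ((j+1 : ℕ) : Fin N)) (fun j : ℕ => g ((j+1 : ℕ) : Fin N)) *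
            ((if x = y then (1:ℂ) else 0) *
              ∏ j ∈ Finset.univ.filter (fun j : Fin N => M + 1 ≤ (j : ℕ)),
                (if f j = g j then (1:ℂ) else 0)) := by
      intro x y a' b'
      rw [ih hMN' a' b' _ _]
      congr 1
      · -- Tm congr
        apply Tm_congr
        · intro j hj
          have hj1 : j + 1 < N := by omega
          have h1 : ((j : Fin N) + 1 : Fin N) = ((j+1 : ℕ) : Fin N) := by push_cast; ring
          have hne : ((j+1 : ℕ) : Fin N) ≠ 0 := by
            intro h
            have := Fin.val_cast_of_lt (n := N) hj1
            rw [h] at this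
            simp at this
          simp only [Function.comp_apply, h1, Function.update_apply, if_neg hne]
        · intro j hj
          have hj1 : j + 1 < N := by omega
          have h1 : ((j : Fin N) + 1 : Fin N) = ((j+1 : ℕ) : Fin N) := by push_cast; ring
          have hne : ((j+1 : ℕ) : Fin N) ≠ 0 := by
            intro h
            have := Fin.val_cast_of_lt (n := N) hj1
            rw [h] at this
            simp at this
          simp only [Function.comp_apply, h1, Function.update_apply, if_neg hne]
      · exact prod_delta_shift M hMN f g x y
    simp only [key]
    simp only [Tm, Nat.cast_zero, starRingEnd_apply]
    rw [Finset.sum_mul]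
    refine Finset.sum_congr rfl fun x _ => ?_
    have hpull : ∀ y : Fin m, (∑ a' : Fin n, ∑ b' : Fin n,
        U (a, f 0) (a', x) *
          ((Tm U M A a' b' (fun j : ℕ => f ((j+1 : ℕ) : Fin N)) fun j : ℕ => g ((j+1 : ℕ) : Fin N)) *
            ((if x = y then (1:ℂ) else 0) *
              ∏ j ∈ Finset.univ.filter (fun j : Fin N => M + 1 ≤ (j:ℕ)),
                (if f j = g j then (1:ℂ) else 0))) * star (U (b, g 0) (b', y)))
        = (if x = y then (1:ℂ) else 0) * ∑ a' : Fin n, ∑ b' : Fin n,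
            U (a, f 0) (a', x) *
              ((Tm U M A a' b' (fun j : ℕ => f ((j+1 : ℕ) : Fin N)) fun j : ℕ => g ((j+1 : ℕ) : Fin N)) *
                ∏ j ∈ Finset.univ.filter (fun j : Fin N => M + 1 ≤ (j:ℕ)),
                  (if f j = g j then (1:ℂ) else 0)) * star (U (b, g 0) (b', y)) := by
      intro y
      rw [Finset.mul_sum]
      refine Finset.sum_congr rfl fun a' _ => ?_
      rw [Finset.mul_sum]
      exact Finset.sum_congr rfl fun b' _ => by ring
    rw [Finset.sum_congr rfl fun y _ => hpull y]
    simp only [boole_mul]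
    rw [Finset.sum_ite_eq Finset.univ x _, if_pos (Finset.mem_univ x)]
    rw [Finset.sum_mul]
    refine Finset.sum_congr rfl fun a' _ => ?_
    rw [Finset.sum_mul]
    exact Finset.sum_congr rfl fun b' _ => by ring

lemma dil_expand (B : Matrix (Fin n) (Fin n) ℂ) (a b : Fin n) :
    ∑ x0 : Fin m, (U * (B ⊗ₖ (1 : Matrix (Fin m) (Fin m) ℂ)) * Uᴴ) (a, x0) (b, x0)
    = ∑ x0 : Fin m, ∑ x : Fin m, ∑ a' : Fin n, ∑ b' : Fin n,
        U (a, x0) (a', x) * B a' b' * star (U (b, x0) (b', x)) := by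
  refine Finset.sum_congr rfl fun x0 _ => ?_
  simp only [Matrix.mul_apply, Matrix.conjTranspose_apply, Fintype.sum_prod_type,
    Matrix.kroneckerMap_apply, Matrix.one_apply, Finset.sum_mul, Finset.mul_sum,
    mul_ite, ite_mul, mul_zero, zero_mul, mul_one]
  rw [Finset.sum_comm]
  refine Finset.sum_congr rfl fun b' _ => ?_
  simp only [Finset.sum_ite_eq', Finset.mem_univ, if_true]
  rw [Finset.sum_comm]

lemma ptr_Tm
    (q : Matrix (Fin n) (Fin n) ℂ → Matrix (Fin n) (Fin n) ℂ)
    (hU_dil : ∀ (A : Matrix (Fin n) (Fin n) ℂ) (i j : Fin n),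
      (1 / (m : ℂ)) * ∑ k : Fin m,
          (U * (A ⊗ₖ (1 : Matrix (Fin m) (Fin m) ℂ)) * Uᴴ) (i, k) (j, k) = q A i j)
    (A : Matrix (Fin n) (Fin n) ℂ) :
    ∀ M : ℕ, M ≤ N → ∀ (a b : Fin n),
      ∑ f : Fin N → Fin m,
        Tm U M A a b (fun j : ℕ => f (j : Fin N)) (fun j : ℕ => f (j : Fin N))
      = (m : ℂ) ^ N * (q^[M] A) a b := by
  intro M
  induction M with
  | zero =>
    intro _ a b
    simp only [Tm, Function.iterate_zero, id_eq, Finset.sum_const, Finset.card_univ,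
      nsmul_eq_mul]
    congr 1
    rw [Fintype.card_fun]
    push_cast
    simp
  | succ M ih =>
    intro hMN a b
    have hMN' : M ≤ N := Nat.le_of_succ_le hMN
    have hm0 : (m : ℂ) ≠ 0 := Nat.cast_ne_zero.mpr (NeZero.ne m)
    have hbij : Function.Bijective (fun f : Fin N → Fin m => f ∘ (fun i : Fin N => i + 1)) := by
      constructor
      · intro f g h
        funext i
        have h2 : i - 1 + 1 = i := by ring
        have := congrFun h (i - 1)
        simpa [Function.comp, h2] using this
      · intro f
        refine ⟨f ∘ (fun i => i - 1), ?_⟩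
        funext i
        have h2 : i + 1 - 1 = i := by ring
        simp [Function.comp, h2]
    have hKsum : ∀ a' b' : Fin n,
        (∑ f : Fin N → Fin m, Tm U M A a' b'
            (fun j : ℕ => f (((j:ℕ)+1 : ℕ) : Fin N)) (fun j : ℕ => f (((j:ℕ)+1 : ℕ) : Fin N)))
        = (m : ℂ)^N * (q^[M] A) a' b' := by
      intro a' b'
      rw [← ih hMN' a' b']
      refine Fintype.sum_bijective _ hbij _ _ (fun f => ?_)
      congr 1 <;>
      · funext j
        simp only [Function.comp_apply]
        congr 1
        push_cast
        ring
    have hne1 : ∀ j : ℕ, j < M → (((j+1 : ℕ)) : Fin N) ≠ 0 := by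
      intro j hj h
      have hj1 : j + 1 < N := by omega
      have := Fin.val_cast_of_lt (n := N) hj1
      rw [h] at this
      simp at this
    have hKr : ∀ (a' b' : Fin n) (x0 : Fin m) (r : {i : Fin N // i ≠ 0} → Fin m),
        Tm U M A a' b'
          (fun j : ℕ => (Equiv.funSplitAt (0 : Fin N) (Fin m)).symm (x0, r) ((j+1 : ℕ) : Fin N))
          (fun j : ℕ => (Equiv.funSplitAt (0 : Fin N) (Fin m)).symm (x0, r) ((j+1 : ℕ) : Fin N))
        = Tm U M A a' b'
          (fun j : ℕ => (Equiv.funSplitAt (0 : Fin N) (Fin m)).symm (0, r) ((j+1 : ℕ) : Fin N))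
          (fun j : ℕ => (Equiv.funSplitAt (0 : Fin N) (Fin m)).symm (0, r) ((j+1 : ℕ) : Fin N)) := by
      intro a' b' x0 r
      apply Tm_congr <;>
      · intro j hj
        simp only [Equiv.funSplitAt_symm_apply, dif_neg (hne1 j hj)]
    have hW : ∀ a' b' : Fin n,
        (m : ℂ) * (∑ r : {i : Fin N // i ≠ 0} → Fin m, Tm U M A a' b'
            (fun j : ℕ => (Equiv.funSplitAt (0 : Fin N) (Fin m)).symm (0, r) ((j+1 : ℕ) : Fin N))
            (fun j : ℕ => (Equiv.funSplitAt (0 : Fin N) (Fin m)).symm (0, r) ((j+1 : ℕ) : Fin N)))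
        = (m : ℂ)^N * (q^[M] A) a' b' := by
      intro a' b'
      rw [← hKsum a' b',
        ← Equiv.sum_comp (Equiv.funSplitAt (0 : Fin N) (Fin m)).symm
          (fun f => Tm U M A a' b'
            (fun j : ℕ => f ((j+1 : ℕ) : Fin N)) (fun j : ℕ => f ((j+1 : ℕ) : Fin N))),
        Fintype.sum_prod_type]
      rw [Finset.sum_congr rfl fun x0 _ => Finset.sum_congr rfl fun r _ => hKr a' b' x0 r]
      rw [Finset.sum_const, Finset.card_univ, Fintype.card_fin, nsmul_eq_mul]
    -- main computation
    simp only [Tm, Nat.cast_zero]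
    rw [← Equiv.sum_comp (Equiv.funSplitAt (0 : Fin N) (Fin m)).symm
      (fun f => ∑ x : Fin m, ∑ a' : Fin n, ∑ b' : Fin n,
        U (a, f 0) (a', x) *
          Tm U M A a' b' (fun j : ℕ => f ((j+1:ℕ) : Fin N)) (fun j : ℕ => f ((j+1:ℕ) : Fin N)) *
          (starRingEnd ℂ) (U (b, f 0) (b', x))), Fintype.sum_prod_type]
    have hpoint : ∀ (x0 : Fin m) (r : {i : Fin N // i ≠ 0} → Fin m),
        (∑ x : Fin m, ∑ a' : Fin n, ∑ b' : Fin n,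
          U (a, (Equiv.funSplitAt (0 : Fin N) (Fin m)).symm (x0, r) 0) (a', x) *
            Tm U M A a' b'
              (fun j : ℕ => (Equiv.funSplitAt (0 : Fin N) (Fin m)).symm (x0, r) ((j+1:ℕ) : Fin N))
              (fun j : ℕ => (Equiv.funSplitAt (0 : Fin N) (Fin m)).symm (x0, r) ((j+1:ℕ) : Fin N)) *
            (starRingEnd ℂ) (U (b, (Equiv.funSplitAt (0 : Fin N) (Fin m)).symm (x0, r) 0) (b', x)))
        = ∑ x : Fin m, ∑ a' : Fin n, ∑ b' : Fin n,
            U (a, x0) (a', x) *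
              Tm U M A a' b'
                (fun j : ℕ => (Equiv.funSplitAt (0 : Fin N) (Fin m)).symm (0, r) ((j+1:ℕ) : Fin N))
                (fun j : ℕ => (Equiv.funSplitAt (0 : Fin N) (Fin m)).symm (0, r) ((j+1:ℕ) : Fin N)) *
              (starRingEnd ℂ) (U (b, x0) (b', x)) := by
      intro x0 r
      have h0eq : (Equiv.funSplitAt (0 : Fin N) (Fin m)).symm (x0, r) 0 = x0 := by
        simp [Equiv.funSplitAt_symm_apply]
      refine Finset.sum_congr rfl fun x _ => Finset.sum_congr rfl fun a' _ =>
        Finset.sum_congr rfl fun b' _ => ?_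
      rw [h0eq, hKr a' b' x0 r]
    rw [Finset.sum_congr rfl fun x0 _ => Finset.sum_congr rfl fun r _ => hpoint x0 r]
    rw [Finset.sum_congr rfl fun x0 (_ : x0 ∈ Finset.univ) => sum4_comm
      (fun (r : {i : Fin N // i ≠ 0} → Fin m) (x : Fin m) (a' : Fin n) (b' : Fin n) =>
        U (a, x0) (a', x) *
          Tm U M A a' b'
            (fun j : ℕ => (Equiv.funSplitAt (0 : Fin N) (Fin m)).symm (0, r) ((j+1:ℕ) : Fin N))
            (fun j : ℕ => (Equiv.funSplitAt (0 : Fin N) (Fin m)).symm (0, r) ((j+1:ℕ) : Fin N)) *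
          (starRingEnd ℂ) (U (b, x0) (b', x)))]
    have stepE : ∀ (x0 : Fin m) (b' : Fin n) (x : Fin m) (a' : Fin n),
        (∑ r : {i : Fin N // i ≠ 0} → Fin m,
          U (a, x0) (a', x) *
            Tm U M A a' b'
              (fun j : ℕ => (Equiv.funSplitAt (0 : Fin N) (Fin m)).symm (0, r) ((j+1:ℕ) : Fin N))
              (fun j : ℕ => (Equiv.funSplitAt (0 : Fin N) (Fin m)).symm (0, r) ((j+1:ℕ) : Fin N)) *
            (starRingEnd ℂ) (U (b, x0) (b', x)))
        = (U (a, x0) (a', x) * (starRingEnd ℂ) (U (b, x0) (b', x))) *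
            ∑ r : {i : Fin N // i ≠ 0} → Fin m,
              Tm U M A a' b'
                (fun j : ℕ => (Equiv.funSplitAt (0 : Fin N) (Fin m)).symm (0, r) ((j+1:ℕ) : Fin N))
                (fun j : ℕ => (Equiv.funSplitAt (0 : Fin N) (Fin m)).symm (0, r) ((j+1:ℕ) : Fin N)) := by
      intro x0 b' x a'
      rw [Finset.mul_sum]
      exact Finset.sum_congr rfl fun r _ => by ring
    rw [Finset.sum_congr rfl fun x0 _ => Finset.sum_congr rfl fun b' _ =>
      Finset.sum_congr rfl fun x _ => Finset.sum_congr rfl fun a' _ => stepE x0 b' x a']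
    have hW2 : ∀ a' b' : Fin n,
        (∑ r : {i : Fin N // i ≠ 0} → Fin m,
          Tm U M A a' b'
            (fun j : ℕ => (Equiv.funSplitAt (0 : Fin N) (Fin m)).symm (0, r) ((j+1:ℕ) : Fin N))
            (fun j : ℕ => (Equiv.funSplitAt (0 : Fin N) (Fin m)).symm (0, r) ((j+1:ℕ) : Fin N)))
        = (m:ℂ)^(N-1) * (q^[M] A) a' b' := by
      intro a' b'
      apply mul_left_cancel₀ hm0
      rw [hW a' b', show ((m:ℂ))^N = (m:ℂ) * (m:ℂ)^(N-1) by
        rw [← pow_succ']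
        congr 1
        omega]
      ring
    simp only [hW2]
    rw [Finset.sum_congr rfl fun x0 (_ : x0 ∈ Finset.univ) => sum3_comm
      (fun (b' : Fin n) (x : Fin m) (a' : Fin n) =>
        (U (a, x0) (a', x) * (starRingEnd ℂ) (U (b, x0) (b', x))) *
          ((m:ℂ)^(N-1) * (q^[M] A) a' b'))]
    have hdil2 : (∑ x0 : Fin m,
        (U * ((q^[M] A) ⊗ₖ (1 : Matrix (Fin m) (Fin m) ℂ)) * Uᴴ) (a, x0) (b, x0))
        = (m:ℂ) * q (q^[M] A) a b := by
      rw [← hU_dil (q^[M] A) a b]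
      field_simp
    calc (∑ x0 : Fin m, ∑ x : Fin m, ∑ a' : Fin n, ∑ b' : Fin n,
          (U (a, x0) (a', x) * (starRingEnd ℂ) (U (b, x0) (b', x))) *
            ((m:ℂ)^(N-1) * (q^[M] A) a' b'))
        = (m:ℂ)^(N-1) * ∑ x0 : Fin m, ∑ x : Fin m, ∑ a' : Fin n, ∑ b' : Fin n,
            U (a, x0) (a', x) * (q^[M] A) a' b' * star (U (b, x0) (b', x)) := by
          rw [Finset.mul_sum]
          refine Finset.sum_congr rfl fun x0 _ => ?_
          rw [Finset.mul_sum]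
          refine Finset.sum_congr rfl fun x _ => ?_
          rw [Finset.mul_sum]
          refine Finset.sum_congr rfl fun a' _ => ?_
          rw [Finset.mul_sum]
          refine Finset.sum_congr rfl fun b' _ => ?_
          rw [starRingEnd_apply]
          ring
      _ = (m:ℂ)^(N-1) * ((m:ℂ) * q (q^[M] A) a b) := by
          rw [← dil_expand U (q^[M] A) a b, hdil2]
      _ = (m:ℂ)^N * (q^[M+1] A) a b := by
          rw [Function.iterate_succ_apply' q M A, show ((m:ℂ))^N = (m:ℂ) * (m:ℂ)^(N-1) by
            rw [← pow_succ']
            congr 1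
            omega]
          ring

end

end DilationAux

/-- Theorem `main`: if a unital quantum channel `q` on `Mₙ` has a unitary matrix
1-dilation `U` acting on `Mₙ ⊗ M_m`, then the `*`-automorphism
`α_N = Ad_{U ⊗ 1} ∘ σ_N` of `Mₙ ⊗ M_m^{⊗N}` (where `σ_N` cyclically permutes the tensor
factors of `M_m^{⊗N}`) is a matrix `N`-dilation of `q`: for every `1 ≤ M ≤ N`, the partial
trace over `M_m^{⊗N}` of `α_N^{(M)} (A ⊗ 1)` equals `q^{(M)} (A)`. -/
theorem matrix_N_dilation_from_unitary_factorization
    (n m N p : ℕ) [NeZero n] [NeZero m] [NeZero N]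
    (q : Matrix (Fin n) (Fin n) ℂ → Matrix (Fin n) (Fin n) ℂ)
    (qk : Fin p → Matrix (Fin n) (Fin n) ℂ)
    (hq : ∀ A, q A = ∑ k, qk k * A * (qk k)ᴴ)
    (hq_unital : ∑ k, qk k * (qk k)ᴴ = 1)
    (hq_tp : ∑ k, (qk k)ᴴ * qk k = 1)
    (U : Matrix (Fin n × Fin m) (Fin n × Fin m) ℂ)
    (hU_unitary : U * Uᴴ = 1 ∧ Uᴴ * U = 1)
    (hU_dil : ∀ (A : Matrix (Fin n) (Fin n) ℂ) (i j : Fin n),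
      (1 / (m : ℂ)) * ∑ k : Fin m,
          (U * (A ⊗ₖ (1 : Matrix (Fin m) (Fin m) ℂ)) * Uᴴ) (i, k) (j, k) = q A i j)
    -- the cyclic tensor-factor permutation `σ_N`
    (σ : Matrix (Fin n × (Fin N → Fin m)) (Fin n × (Fin N → Fin m)) ℂ →
         Matrix (Fin n × (Fin N → Fin m)) (Fin n × (Fin N → Fin m)) ℂ)
    (hσ : ∀ X (a b : Fin n) (f g : Fin N → Fin m),
      σ X (a, f) (b, g) = X (a, f ∘ (fun i : Fin N => i + 1)) (b, g ∘ (fun i : Fin N => i + 1)))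
    -- `U_N`, the unitary `U` acting on `Mₙ` and the 0-th tensor factor of `M_m^{⊗N}`
    (UN : Matrix (Fin n × (Fin N → Fin m)) (Fin n × (Fin N → Fin m)) ℂ)
    (hUN : ∀ (a b : Fin n) (f g : Fin N → Fin m),
      UN (a, f) (b, g)
        = U (a, f 0) (b, g 0) *
            ∏ i ∈ Finset.univ.filter (fun i : Fin N => i ≠ 0),
              (if f i = g i then (1 : ℂ) else 0))
    -- the `*`-automorphism `α_N = Ad_{U_N} ∘ σ_N`
    (α : Matrix (Fin n × (Fin N → Fin m)) (Fin n × (Fin N → Fin m)) ℂ →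
         Matrix (Fin n × (Fin N → Fin m)) (Fin n × (Fin N → Fin m)) ℂ)
    (hα : ∀ X, α X = UN * σ X * UNᴴ) :
    ∀ (M : ℕ), 1 ≤ M → M ≤ N →
      ∀ (A : Matrix (Fin n) (Fin n) ℂ) (a b : Fin n),
        (1 / (m : ℂ) ^ N) * ∑ f : Fin N → Fin m,
            (α^[M] (A ⊗ₖ (1 : Matrix (Fin N → Fin m) (Fin N → Fin m) ℂ))) (a, f) (b, f)
          = (q^[M] A) a b := by
  intro M _ hMN A a b
  have hm0 : (m : ℂ) ≠ 0 := Nat.cast_ne_zero.mpr (NeZero.ne m)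
  have hent := iterate_entry U σ UN α hσ hUN hα A M hMN
  open Fin.CommRing in
  have hsum : (∑ f : Fin N → Fin m,
      (α^[M] (A ⊗ₖ (1 : Matrix (Fin N → Fin m) (Fin N → Fin m) ℂ))) (a, f) (b, f))
      = ∑ f : Fin N → Fin m,
          Tm U M A a b (fun j : ℕ => f (j : Fin N)) (fun j : ℕ => f (j : Fin N)) := by
    refine Finset.sum_congr rfl fun f _ => ?_
    rw [hent a b f f]
    simp
  rw [hsum, ptr_Tm U q hU_dil A M hMN a b, one_div,
    inv_mul_cancel_left₀ (pow_ne_zero N hm0)]
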